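/- Let α be a unit speed surface curve with k_n nowhere zero. Define F(s) = exp(∫(k_g τ_g / k_n)ds), y₂(s) = F(s)^{-1}[∫F(s)(τ_g/k_n)ds + c₈], y₃(s) = −(k_g/k_n)y₂(s) + 1/k_n, y₁ = 0. Then y₁' − k_g y₂ − k_n y₃ + 1 = 0 and y₂' + k_g y₁ − τ_g y₃ = 0, so the curve γ(s) = α(s) + y₂(s)V(s) + y₃(s)U(s) satisfies γ'(s) parallel to U(s). -/

import Mathlib

noncomputable section

/-- ICC-associated helix of type 1, case `k_n ≠ 0`. -/
theorem stmt_13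
    (α T V U γ : ℝ → EuclideanSpace ℝ (Fin 3)) (kg kn tg y₁ y₂ y₃ F H : ℝ → ℝ) (c₈ : ℝ)
    (hα : Differentiable ℝ α) (hT : Differentiable ℝ T)
    (hV : Differentiable ℝ V) (hU : Differentiable ℝ U)
    (hkgd : Differentiable ℝ kg) (hknd : Differentiable ℝ kn) (htgd : Differentiable ℝ tg)
    (hαT : ∀ s, deriv α s = T s)
    (hdT : ∀ s, deriv T s = kg s • V s + kn s • U s)
    (hdV : ∀ s, deriv V s = (-kg s) • T s + tg s • U s)
    (hdU : ∀ s, deriv U s = (-kn s) • T s + (-tg s) • V s)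
    (hkn : ∀ s, kn s ≠ 0)
    -- F is an antiderivative of k_g τ_g / k_n, so that F(s) in the paper is exp F here;
    -- H is an antiderivative of exp(F) τ_g / k_n
    (hF : ∀ s, HasDerivAt F (kg s * tg s / kn s) s)
    (hH : ∀ s, HasDerivAt H (Real.exp (F s) * (tg s / kn s)) s)
    (hy₂ : ∀ s, y₂ s = (Real.exp (F s))⁻¹ * (H s + c₈))
    (hy₃ : ∀ s, y₃ s = -(kg s / kn s) * y₂ s + 1 / kn s)
    (hy₁ : ∀ s, y₁ s = 0)
    (hγ : ∀ s, γ s = α s + y₂ s • V s + y₃ s • U s) :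
    (∀ s, deriv y₁ s - kg s * y₂ s - kn s * y₃ s + 1 = 0) ∧
    (∀ s, deriv y₂ s + kg s * y₁ s - tg s * y₃ s = 0) ∧
    (∃ r : ℝ → ℝ, ∀ s, deriv γ s = r s • U s) := by

  -- derivative of y₂
  have hy2d : ∀ s, HasDerivAt y₂ (tg s / kn s - kg s * tg s / kn s * y₂ s) s := by
    intro s
    have hexp : HasDerivAt (fun s => Real.exp (F s))
        (Real.exp (F s) * (kg s * tg s / kn s)) s := (hF s).exp
    have h1 := ((hexp.inv (Real.exp_ne_zero _)).mul ((hH s).add_const c₈))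
    have heq : (fun s => (Real.exp (F s))⁻¹ * (H s + c₈)) = y₂ :=
      funext fun s => (hy₂ s).symm
    replace h1 : HasDerivAt y₂ (-(Real.exp (F s) * (kg s * tg s / kn s)) / Real.exp (F s) ^ 2 * (H s + c₈) +
        (Real.exp (F s))⁻¹ * (Real.exp (F s) * (tg s / kn s))) s := by
      rw [← heq]; exact h1
    convert h1 using 1
    rw [hy₂ s]
    have hE : Real.exp (F s) ≠ 0 := Real.exp_ne_zero _
    have key : Real.exp (F s) * (Real.exp (F s))⁻¹ = 1 := mul_inv_cancel₀ hE
    linear_combination (kg s * tg s / kn s * (Real.exp (F s))⁻¹ * (H s + c₈)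
      - tg s / kn s) * key
  have hz1 : ∀ s, 1 - kg s * y₂ s - kn s * y₃ s = 0 := by
    intro s
    rw [hy₃ s]
    field_simp [hkn s]
    ring
  have hz2 : ∀ s, deriv y₂ s - tg s * y₃ s = 0 := by
    intro s
    rw [(hy2d s).deriv, hy₃ s]
    field_simp
    ring
  refine ⟨?_, ?_, ?_⟩
  · intro s
    have : deriv y₁ s = 0 := by
      have : y₁ = fun _ => (0 : ℝ) := funext hy₁
      rw [this]; simp
    rw [this]
    linarith [hz1 s]
  · intro s
    rw [hy₁ s]
    linarith [hz2 s]
  · -- differentiability of y₃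
    have hy3diff : ∀ s, DifferentiableAt ℝ y₃ s := by
      intro s
      have : y₃ = fun s => -(kg s / kn s) * y₂ s + 1 / kn s := funext hy₃
      rw [this]
      exact ((((hkgd s).div (hknd s) (hkn s)).neg.mul
        (hy2d s).differentiableAt).add ((differentiableAt_const 1).div (hknd s) (hkn s)))
    refine ⟨fun s => y₂ s * tg s + deriv y₃ s, fun s => ?_⟩
    have hA : HasDerivAt α (T s) s := hαT s ▸ (hα s).hasDerivAt
    have hVd : HasDerivAt V ((-kg s) • T s + tg s • U s) s := hdV s ▸ (hV s).hasDerivAt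
    have hUd : HasDerivAt U ((-kn s) • T s + (-tg s) • V s) s := hdU s ▸ (hU s).hasDerivAt
    have h2 := (hy2d s).smul hVd
    have h3 := (hy3diff s).hasDerivAt.smul hUd
    have hγeq : γ = fun s => α s + y₂ s • V s + y₃ s • U s := funext hγ
    have hγd := (hA.add h2).add h3
    rw [hγeq, show (fun s => α s + y₂ s • V s + y₃ s • U s) = α + y₂ • V + y₃ • U from rfl, hγd.deriv]
    have e1 := hz1 s
    have e2 := hz2 s
    have e2' : tg s / kn s - kg s * tg s / kn s * y₂ s - tg s * y₃ s = 0 := by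
      rw [← (hy2d s).deriv]; exact e2
    match_scalars
    · linarith
    · ring
    · linear_combination e2'
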